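/- Let 0 ≤ α < 1 and f(z) = z - Σ_{n≥2}A_n z^n + conj(Σ_{n≥2}B_n z^n) with A_n,B_n ≥ 0 (note B_1 = 0). If Σ_{n≥2}(n-α)(A_n + B_n) ≤ 1-α (i.e., f ∈ TS*^0_H(α)), then Σ_{n≥2}(A_n + B_n) ≤ (1-α)/(2-α); consequently Re(f(z)/z) > 1/(2-α) for all z ≠ 0 in the unit disk, i.e., TS*^0_H(α) ⊂ TU^0_H(1/(2-α)). -/

import Mathlib

open Complex

private lemma aux_sum (c : ℕ → ℝ) (hc : ∀ n, 0 ≤ c n) (hcs : Summable c)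
    (z : ℂ) (hz : ‖z‖ ≤ 1) :
    Summable (fun n : ℕ => (c n : ℂ) * z ^ (n + 2)) ∧
    ‖∑' n : ℕ, (c n : ℂ) * z ^ (n + 2)‖ ≤ ‖z‖ ^ 2 * ∑' n : ℕ, c n := by
  have hnorm : ∀ n : ℕ, ‖(c n : ℂ) * z ^ (n + 2)‖ ≤ c n * ‖z‖ ^ 2 := by
    intro n
    rw [norm_mul, norm_pow, Complex.norm_real, Real.norm_of_nonneg (hc n)]
    have h1 : ‖z‖ ^ (n + 2) ≤ ‖z‖ ^ 2 :=
      pow_le_pow_of_le_one (norm_nonneg z) hz (by omega)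
    exact mul_le_mul_of_nonneg_left h1 (hc n)
  have hsum2 : Summable (fun n : ℕ => c n * ‖z‖ ^ 2) := hcs.mul_right _
  have hsn : Summable (fun n : ℕ => ‖(c n : ℂ) * z ^ (n + 2)‖) :=
    Summable.of_nonneg_of_le (fun n => norm_nonneg _) hnorm hsum2
  have hsc : Summable (fun n : ℕ => (c n : ℂ) * z ^ (n + 2)) := hsn.of_norm
  refine ⟨hsc, ?_⟩
  calc ‖∑' n : ℕ, (c n : ℂ) * z ^ (n + 2)‖ ≤ ∑' n : ℕ, ‖(c n : ℂ) * z ^ (n + 2)‖ :=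
        norm_tsum_le_tsum_norm hsn
    _ ≤ ∑' n : ℕ, c n * ‖z‖ ^ 2 := Summable.tsum_le_tsum hnorm hsn hsum2
    _ = ‖z‖ ^ 2 * ∑' n : ℕ, c n := by rw [tsum_mul_right]; ring

/-- `TS*^0_H(α) ⊂ TU^0_H(1/(2-α))`: if `Σ_{n≥2} (n-α)(A_n + B_n) ≤ 1-α`
(nonnegative coefficients, `B₁ = 0`), then `Σ_{n≥2} (A_n + B_n) ≤ (1-α)/(2-α)`,
and consequently `Re(f(z)/z) > 1/(2-α)` on the punctured unit disk for
`f(z) = z - Σ_{n≥2} A_n z^n + conj(Σ_{n≥2} B_n z^n)`. -/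
theorem TSstar_subset_TUH
    (α : ℝ) (hα : 0 ≤ α) (hα1 : α < 1)
    (A B : ℕ → ℝ)
    (hA : ∀ n, 2 ≤ n → 0 ≤ A n) (hB : ∀ n, 2 ≤ n → 0 ≤ B n)
    (hS : Summable fun n : ℕ => (((n : ℝ) + 2) - α) * (A (n + 2) + B (n + 2)))
    (hsum : (∑' n : ℕ, (((n : ℝ) + 2) - α) * (A (n + 2) + B (n + 2))) ≤ 1 - α) :
    (Summable fun n : ℕ => A (n + 2) + B (n + 2)) ∧
    (∑' n : ℕ, (A (n + 2) + B (n + 2))) ≤ (1 - α) / (2 - α) ∧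
    (∀ z : ℂ, ‖z‖ < 1 → z ≠ 0 →
      1 / (2 - α) < (((z - ∑' n : ℕ, (A (n + 2) : ℂ) * z ^ (n + 2)
          + starRingEnd ℂ (∑' n : ℕ, (B (n + 2) : ℂ) * z ^ (n + 2))) / z).re)) := by
  have h2α : (0:ℝ) < 2 - α := by linarith
  have hABnn : ∀ n : ℕ, 0 ≤ A (n + 2) + B (n + 2) := fun n =>
    add_nonneg (hA _ (by omega)) (hB _ (by omega))
  have hcoef : ∀ n : ℕ, (2 - α) ≤ ((n : ℝ) + 2) - α := by
    intro n; have : (0:ℝ) ≤ n := Nat.cast_nonneg n; linarith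
  have hle : ∀ n : ℕ, A (n + 2) + B (n + 2) ≤
      (((n : ℝ) + 2) - α) * (A (n + 2) + B (n + 2)) := by
    intro n
    have h1 : (1:ℝ) ≤ ((n : ℝ) + 2) - α := by have := hcoef n; linarith
    nlinarith [hABnn n]
  have hABs : Summable (fun n : ℕ => A (n + 2) + B (n + 2)) :=
    Summable.of_nonneg_of_le hABnn hle hS
  have hbound : (∑' n : ℕ, (A (n + 2) + B (n + 2))) ≤ (1 - α) / (2 - α) := by
    rw [le_div_iff₀ h2α]
    have h1 : (∑' n : ℕ, (A (n + 2) + B (n + 2))) * (2 - α)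
        = ∑' n : ℕ, (2 - α) * (A (n + 2) + B (n + 2)) := by
      rw [tsum_mul_left]; ring
    rw [h1]
    refine le_trans (Summable.tsum_le_tsum (fun n => ?_) (hABs.mul_left _) hS) hsum
    exact mul_le_mul_of_nonneg_right (hcoef n) (hABnn n)
  refine ⟨hABs, hbound, ?_⟩
  intro z hz hz0
  have hAs : Summable (fun n : ℕ => A (n + 2)) :=
    Summable.of_nonneg_of_le (fun n => hA _ (by omega))
      (fun n => by have := hB (n+2) (by omega); linarith) hABs
  have hBs : Summable (fun n : ℕ => B (n + 2)) :=
    Summable.of_nonneg_of_le (fun n => hB _ (by omega))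
      (fun n => by have := hA (n+2) (by omega); linarith) hABs
  set SA := ∑' n : ℕ, A (n + 2) with hSA
  set SB := ∑' n : ℕ, B (n + 2) with hSB
  have hSsplit : SA + SB = ∑' n : ℕ, (A (n + 2) + B (n + 2)) :=
    (Summable.tsum_add hAs hBs).symm
  obtain ⟨hPAs, hPA⟩ := aux_sum (fun n => A (n + 2)) (fun n => hA _ (by omega)) hAs z hz.le
  obtain ⟨hPBs, hPB⟩ := aux_sum (fun n => B (n + 2)) (fun n => hB _ (by omega)) hBs z hz.le
  set PA := ∑' n : ℕ, (A (n + 2) : ℂ) * z ^ (n + 2) with hPAdef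
  set PB := ∑' n : ℕ, (B (n + 2) : ℂ) * z ^ (n + 2) with hPBdef
  have hzn : (0:ℝ) < ‖z‖ := norm_pos_iff.mpr hz0
  have hrw : (z - PA + starRingEnd ℂ PB) / z = 1 + (starRingEnd ℂ PB - PA) / z := by
    field_simp
    ring
  rw [hrw, Complex.add_re, Complex.one_re]
  have hwnorm : ‖(starRingEnd ℂ PB - PA) / z‖ ≤ ‖z‖ * (SB + SA) := by
    rw [norm_div]
    rw [div_le_iff₀ hzn]
    calc ‖starRingEnd ℂ PB - PA‖ ≤ ‖starRingEnd ℂ PB‖ + ‖PA‖ := norm_sub_le _ _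
      _ = ‖PB‖ + ‖PA‖ := by rw [Complex.norm_conj]
      _ ≤ ‖z‖ ^ 2 * SB + ‖z‖ ^ 2 * SA := add_le_add hPB hPA
      _ = ‖z‖ * (SB + SA) * ‖z‖ := by ring
  have hre : -(‖z‖ * (SB + SA)) ≤ ((starRingEnd ℂ PB - PA) / z).re := by
    have h1 : |((starRingEnd ℂ PB - PA) / z).re| ≤ ‖(starRingEnd ℂ PB - PA) / z‖ :=
      Complex.abs_re_le_norm _
    have := (abs_le.mp h1).1
    linarith
  -- strict bound
  have hSnn : 0 ≤ SA + SB := by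
    rw [hSsplit]; exact tsum_nonneg hABnn
  have hkey : ‖z‖ * (SA + SB) < (1 - α) / (2 - α) := by
    rcases eq_or_lt_of_le hSnn with h | h
    · rw [← h, mul_zero]
      exact div_pos (by linarith) h2α
    · calc ‖z‖ * (SA + SB) < 1 * (SA + SB) := by
            exact mul_lt_mul_of_pos_right hz h
        _ = SA + SB := one_mul _
        _ ≤ (1 - α) / (2 - α) := by rw [hSsplit]; exact hbound
  have hfin : 1 / (2 - α) = 1 - (1 - α) / (2 - α) := by field_simp; ring
  rw [hfin]
  have : ‖z‖ * (SB + SA) < (1 - α) / (2 - α) := by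
    have : SB + SA = SA + SB := by ring
    rw [this]; exact hkey
  linarith
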